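/- Let C be a closed subset of the rotation poset and S = {s} ∪ {v_i : ρ_i ∈ C} the corresponding ideal cut in the augmented DAG G. For any boy-girl pair bg not in every stable matching, the cut S cuts the associated path P_{bg} (i.e., some edge of P_{bg} crosses from S to its complement) if and only if the stable matching generated by C contains the pair bg. -/

import Mathlib

/-- `rB b g` is the rank boy `b` gives girl `g` (smaller = more preferred), and
`rG g b` the rank girl `g` gives boy `b`.  A matching (bijection) `M` is stable if
no pair `(b, g)` prefer each other to their partners. -/
def StableM {B G : Type*} (rB : B → G → ℕ) (rG : G → B → ℕ) (M : B ≃ G) : Prop :=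
  ∀ (b : B) (g : G), ¬ (rB b g < rB b (M b) ∧ rG g b < rG g (M.symm g))

/-- The total weight of a matching. -/
def matchWeight {B G : Type*} [Fintype B] (w : B → G → ℚ) (M : B ≃ G) : ℚ :=
  ∑ b, w b (M b)

/-- A maximum weight stable matching. -/
def MaxWtStable {B G : Type*} [Fintype B] (rB : B → G → ℕ) (rG : G → B → ℕ)
    (w : B → G → ℚ) (M : B ≃ G) : Prop :=
  StableM rB rG M ∧ ∀ N : B ≃ G, StableM rB rG N → matchWeight w N ≤ matchWeight w M

/-- A rotation: a cyclic sequence of `r ≥ 2` distinct pairs `(b_i, g_i)`.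
Indices live in `ZMod r` so that `i + 1` wraps around. -/
structure Rotation (B G : Type*) where
  r : ℕ
  two_le : 2 ≤ r
  bs : ZMod r → B
  gs : ZMod r → G
  inj_bs : Function.Injective bs
  inj_gs : Function.Injective gs

/-- `ρ` is exposed in `M`: each `b_i` is matched to `g_i`, and `g_{i+1} = s_M(b_i)` is
the first girl on `b_i`'s list preferring `b_i` to her `M`-partner. -/
def Exposed {B G : Type*} (rB : B → G → ℕ) (rG : G → B → ℕ) (M : B ≃ G)
    (ρ : Rotation B G) : Prop :=
  (∀ i, M (ρ.bs i) = ρ.gs i) ∧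
    (∀ i, rG (ρ.gs (i + 1)) (ρ.bs i) < rG (ρ.gs (i + 1)) (M.symm (ρ.gs (i + 1)))) ∧
    (∀ i, ∀ g : G, rB (ρ.bs i) g < rB (ρ.bs i) (ρ.gs (i + 1)) →
      ¬ (rG g (ρ.bs i) < rG g (M.symm g)))

/-- `M'` results from `M` by eliminating the rotation `ρ` (exposed in `M`):
each `b_i` moves from `g_i` to `g_{i+1}`, everyone else keeps their partner. -/
def Eliminates {B G : Type*} (rB : B → G → ℕ) (rG : G → B → ℕ)
    (M : B ≃ G) (ρ : Rotation B G) (M' : B ≃ G) : Prop :=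
  Exposed rB rG M ρ ∧ (∀ i, M' (ρ.bs i) = ρ.gs (i + 1)) ∧
    ∀ b : B, (∀ i, b ≠ ρ.bs i) → M' b = M b

/-- `ElimChain rB rG M L M'`: the list `L` of rotations can be eliminated one after
another starting from `M` and ending at `M'`. -/
def ElimChain {B G : Type*} (rB : B → G → ℕ) (rG : G → B → ℕ) :
    (B ≃ G) → List (Rotation B G) → (B ≃ G) → Prop
  | M, [], M' => M = M'
  | M, ρ :: L, M' => ∃ N : B ≃ G, Eliminates rB rG M ρ N ∧ ElimChain rB rG N L M'

/-- The boy-optimal stable matching. -/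
def BoyOptimal {B G : Type*} (rB : B → G → ℕ) (rG : G → B → ℕ) (M₀ : B ≃ G) : Prop :=
  StableM rB rG M₀ ∧ ∀ M : B ≃ G, StableM rB rG M → ∀ b, rB b (M₀ b) ≤ rB b (M b)

/-- The girl-optimal stable matching. -/
def GirlOptimal {B G : Type*} (rB : B → G → ℕ) (rG : G → B → ℕ) (Mz : B ≃ G) : Prop :=
  StableM rB rG Mz ∧ ∀ M : B ≃ G, StableM rB rG M → ∀ g, rG g (Mz.symm g) ≤ rG g (M.symm g)

/-- `ρ` is a rotation of the instance: it is exposed in some stable matching. -/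
def IsRotation {B G : Type*} (rB : B → G → ℕ) (rG : G → B → ℕ) (ρ : Rotation B G) : Prop :=
  ∃ M : B ≃ G, StableM rB rG M ∧ Exposed rB rG M ρ

/-- The set of pairs of a rotation (rotations are identified up to cyclic shift by
having equal pair sets). -/
def rotPairs {B G : Type*} (ρ : Rotation B G) : Set (B × G) :=
  {p | ∃ i, p = (ρ.bs i, ρ.gs i)}

/-- `ρ` moves `b` to `g`: after eliminating `ρ`, `b` is matched to `g`. -/
def MovesTo {B G : Type*} (ρ : Rotation B G) (b : B) (g : G) : Prop :=
  ∃ i, ρ.bs i = b ∧ ρ.gs (i + 1) = g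

/-- `ρ` moves `b` from `g`: before eliminating `ρ`, `b` is matched to `g`. -/
def MovesFrom {B G : Type*} (ρ : Rotation B G) (b : B) (g : G) : Prop :=
  ∃ i, ρ.bs i = b ∧ ρ.gs i = g

/-- `ρ'` precedes `ρ` in the rotation poset: `ρ'` is eliminated (up to cyclic shift)
in every sequence of eliminations from the boy-optimal matching `M₀` to a stable
matching in which `ρ` is exposed. -/
def Precedes {B G : Type*} (rB : B → G → ℕ) (rG : G → B → ℕ)
    (ρ' ρ : Rotation B G) : Prop :=
  ∀ (M₀ : B ≃ G) (L : List (Rotation B G)) (M : B ≃ G),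
    BoyOptimal rB rG M₀ → ElimChain rB rG M₀ L M → Exposed rB rG M ρ →
      ∃ ρ'' ∈ L, rotPairs ρ'' = rotPairs ρ'

/-- Vertices of the DAG `G` built from the rotation poset: a source, a sink, and one
vertex per rotation (indexed by `ι`). -/
inductive Vtx (ι : Type*) where
  | src : Vtx ι
  | snk : Vtx ι
  | node : ι → Vtx ι
deriving DecidableEq

instance {ι : Type*} [Fintype ι] [DecidableEq ι] : Fintype (Vtx ι) :=
  Fintype.ofSurjective
    (fun x : Option (Option ι) =>
      match x with
      | none => Vtx.src
      | some none => Vtx.snk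
      | some (some i) => Vtx.node i)
    (by rintro (_ | _ | i) <;> [exact ⟨none, rfl⟩; exact ⟨some none, rfl⟩;
          exact ⟨some (some i), rfl⟩])

/-- `M` is the stable matching generated by the (closed) set `C` of rotation indices:
it is obtained from `M₀` by eliminating the rotations of `C` in some (topological)
order. -/
def GeneratedBy {B G ι : Type*} (rB : B → G → ℕ) (rG : G → B → ℕ) (M₀ : B ≃ G)
    (rot : ι → Rotation B G) (C : Set ι) (M : B ≃ G) : Prop :=
  ∃ L : List ι, (∀ i, i ∈ L ↔ i ∈ C) ∧ ElimChain rB rG M₀ (L.map rot) M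

/-- The defining conditions on the path `P_{bg}` associated to a pair `bg` occurring in
some but not all stable matchings (`M₀` boy-optimal, `Mz` girl-optimal):
from the source to the rotation moving `b` from `g`, or from the rotation moving `b`
to `g` to the sink, or between the two rotations, according to whether `bg ∈ M₀`
and/or `bg ∈ Mz`. -/
def PathSpec {B G ι : Type*} (M₀ Mz : B ≃ G) (rot : ι → Rotation B G)
    (b : B) (g : G) (P : List (Vtx ι)) : Prop :=
  (M₀ b = g ∧ Mz b ≠ g ∧ ∃ i, MovesFrom (rot i) b g ∧
      P.head? = some Vtx.src ∧ P.getLast? = some (Vtx.node i)) ∨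
  (M₀ b ≠ g ∧ Mz b = g ∧ ∃ i, MovesTo (rot i) b g ∧
      P.head? = some (Vtx.node i) ∧ P.getLast? = some Vtx.snk) ∨
  (M₀ b ≠ g ∧ Mz b ≠ g ∧ ∃ i j, MovesTo (rot i) b g ∧ MovesFrom (rot j) b g ∧
      P.head? = some (Vtx.node i) ∧ P.getLast? = some (Vtx.node j))

/-- The cut with source side `S` cuts the path `P`: some edge of `P` crosses from `S`
to its complement. -/
def CutsPath {W : Type*} (S : Set W) (P : List W) : Prop :=
  ∃ q ∈ P.zip P.tail, q.1 ∈ S ∧ q.2 ∉ S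


set_option linter.unusedSectionVars false

section Aux1
variable {B G : Type*} [Fintype B] [Fintype G] [DecidableEq B] [DecidableEq G]
variable {rB : B → G → ℕ} {rG : G → B → ℕ}

lemma aux_symm_eq_bs {M : B ≃ G} {ρ : Rotation B G} (h : Exposed rB rG M ρ) (m : ZMod ρ.r) :
    M.symm (ρ.gs m) = ρ.bs m := by
  rw [Equiv.symm_apply_eq]; exact (h.1 m).symm

lemma aux_succ_girl_ne {M : B ≃ G} {ρ : Rotation B G} (h : Exposed rB rG M ρ) (m : ZMod ρ.r) :
    ρ.gs (m + 1) ≠ ρ.gs m := by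
  intro he
  have h2 := h.2.1 m
  rw [he, aux_symm_eq_bs h m] at h2
  exact lt_irrefl _ h2

lemma aux_succ_worse (hrB : ∀ b, Function.Injective (rB b)) {M : B ≃ G} {ρ : Rotation B G}
    (hS : StableM rB rG M) (hE : Exposed rB rG M ρ) (m : ZMod ρ.r) :
    rB (ρ.bs m) (ρ.gs m) < rB (ρ.bs m) (ρ.gs (m + 1)) := by
  have h2 := hE.2.1 m
  have h3 : ¬ (rB (ρ.bs m) (ρ.gs (m+1)) < rB (ρ.bs m) (M (ρ.bs m))) :=
    fun hlt => hS _ _ ⟨hlt, h2⟩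
  rw [hE.1 m] at h3
  exact lt_of_le_of_ne (not_lt.mp h3) (fun he => aux_succ_girl_ne hE m ((hrB _ he).symm))

/-- The permutation of boys realizing a rotation. -/
def rotPerm {B G : Type*} [Fintype B] [DecidableEq B] (ρ : Rotation B G) : Equiv.Perm B :=
  haveI : NeZero ρ.r := ⟨by have := ρ.two_le; omega⟩
  Equiv.Perm.viaFintypeEmbedding (Equiv.addRight (1 : ZMod ρ.r)) ⟨ρ.bs, ρ.inj_bs⟩

lemma rotPerm_bs (ρ : Rotation B G) (m : ZMod ρ.r) : rotPerm ρ (ρ.bs m) = ρ.bs (m + 1) := by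
  haveI : NeZero ρ.r := ⟨by have := ρ.two_le; omega⟩
  exact Equiv.Perm.viaFintypeEmbedding_apply_image (Equiv.addRight (1 : ZMod ρ.r))
    ⟨ρ.bs, ρ.inj_bs⟩ m

lemma rotPerm_other (ρ : Rotation B G) {b : B} (h : ∀ m, b ≠ ρ.bs m) : rotPerm ρ b = b := by
  haveI : NeZero ρ.r := ⟨by have := ρ.two_le; omega⟩
  exact Equiv.Perm.viaFintypeEmbedding_apply_notMem_range _ _
    (by rintro ⟨m, hm⟩; exact h m hm.symm)

/-- The matching obtained by eliminating a rotation. -/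
def elimEquiv {B G : Type*} [Fintype B] [DecidableEq B] (ρ : Rotation B G) (M : B ≃ G) :
    B ≃ G :=
  (rotPerm ρ).trans M

lemma elim_eliminates {M : B ≃ G} {ρ : Rotation B G} (hE : Exposed rB rG M ρ) :
    Eliminates rB rG M ρ (elimEquiv ρ M) := by
  refine ⟨hE, fun m => ?_, fun b hb => ?_⟩
  · show M (rotPerm ρ (ρ.bs m)) = ρ.gs (m + 1)
    rw [rotPerm_bs, hE.1]
  · show M (rotPerm ρ b) = M b
    rw [rotPerm_other ρ hb]

end Aux1

section Aux2
variable {B G : Type*} [Fintype B] [Fintype G] [DecidableEq B] [DecidableEq G]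
variable {rB : B → G → ℕ} {rG : G → B → ℕ}

lemma elim_symm_gs {M M' : B ≃ G} {ρ : Rotation B G} (hel : Eliminates rB rG M ρ M')
    (m : ZMod ρ.r) : M'.symm (ρ.gs m) = ρ.bs (m - 1) := by
  rw [Equiv.symm_apply_eq]
  have := hel.2.1 (m - 1)
  rw [show m - 1 + 1 = m by ring] at this
  exact this.symm

lemma elim_symm_other {M M' : B ≃ G} {ρ : Rotation B G} (hel : Eliminates rB rG M ρ M')
    {g : G} (h : ∀ m, g ≠ ρ.gs m) : M'.symm g = M.symm g := by
  have hb : ∀ m, M.symm g ≠ ρ.bs m := by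
    intro m he
    exact h m (by rw [← hel.1.1 m, ← he, M.apply_symm_apply])
  rw [Equiv.symm_apply_eq, hel.2.2 _ hb, M.apply_symm_apply]

lemma girl_improves {M M' : B ≃ G} {ρ : Rotation B G} (hel : Eliminates rB rG M ρ M')
    (g : G) : rG g (M'.symm g) ≤ rG g (M.symm g) := by
  by_cases h : ∃ m, g = ρ.gs m
  · obtain ⟨m, rfl⟩ := h
    rw [elim_symm_gs hel]
    have h2 := hel.1.2.1 (m - 1)
    rw [show m - 1 + 1 = m by ring] at h2
    exact le_of_lt h2
  · push_neg at h
    rw [elim_symm_other hel h]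

lemma elim_stable {M M' : B ≃ G} {ρ : Rotation B G} (hS : StableM rB rG M)
    (hel : Eliminates rB rG M ρ M') : StableM rB rG M' := by
  rintro b g ⟨h1, h2⟩
  have hg : rG g b < rG g (M.symm g) := lt_of_lt_of_le h2 (girl_improves hel g)
  by_cases hb : ∃ m, b = ρ.bs m
  · obtain ⟨m, rfl⟩ := hb
    rw [hel.2.1 m] at h1
    exact hel.1.2.2 m g h1 hg
  · push_neg at hb
    rw [hel.2.2 b hb] at h1
    exact hS b g ⟨h1, hg⟩

lemma boy_worsens (hrB : ∀ b, Function.Injective (rB b)) {M M' : B ≃ G} {ρ : Rotation B G}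
    (hS : StableM rB rG M) (hel : Eliminates rB rG M ρ M') (b : B) :
    rB b (M b) ≤ rB b (M' b) := by
  by_cases hb : ∃ m, b = ρ.bs m
  · obtain ⟨m, rfl⟩ := hb
    rw [hel.1.1 m, hel.2.1 m]
    exact le_of_lt (aux_succ_worse hrB hS hel.1 m)
  · push_neg at hb
    rw [hel.2.2 b hb]

/-- Key counting lemma: if a girl strictly prefers her `M`-partner to her `Q`-partner,
then her `Q`-partner strictly prefers his `Q`-partner to his `M`-partner. -/
lemma keyD (hrB : ∀ b, Function.Injective (rB b)) (hrG : ∀ g, Function.Injective (rG g))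
    {M Q : B ≃ G} (hM : StableM rB rG M) (hQ : StableM rB rG Q) {g : G}
    (h : rG g (M.symm g) < rG g (Q.symm g)) :
    rB (Q.symm g) g < rB (Q.symm g) (M (Q.symm g)) := by
  classical
  set X : Finset B := Finset.univ.filter (fun b => rB b (Q b) < rB b (M b)) with hX
  set Y : Finset G := Finset.univ.filter (fun g => rG g (M.symm g) < rG g (Q.symm g)) with hY
  have hQX : Finset.image (⇑Q) X ⊆ Y := by
    intro g' hg'
    rw [Finset.mem_image] at hg'
    obtain ⟨b, hb, rfl⟩ := hg'
    rw [hX, Finset.mem_filter] at hb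
    have hb' := hb.2
    rw [hY, Finset.mem_filter]
    refine ⟨Finset.mem_univ _, ?_⟩
    rw [Q.symm_apply_apply]
    have hne : M.symm (Q b) ≠ b := by
      intro he
      have h5 := congrArg M he
      rw [M.apply_symm_apply] at h5
      rw [← h5] at hb'
      exact lt_irrefl _ hb'
    have := not_lt.mp (fun hlt => hM b (Q b) ⟨hb', hlt⟩)
    exact lt_of_le_of_ne this (fun he => hne (hrG _ he))
  have hYX : Finset.image (⇑M.symm) Y ⊆ X := by
    intro b hb
    rw [Finset.mem_image] at hb
    obtain ⟨g', hg', rfl⟩ := hb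
    rw [hY, Finset.mem_filter] at hg'
    have hg'' := hg'.2
    rw [hX, Finset.mem_filter]
    refine ⟨Finset.mem_univ _, ?_⟩
    have hne : Q (M.symm g') ≠ g' := by
      intro he
      have h5 := congrArg Q.symm he
      rw [Q.symm_apply_apply] at h5
      rw [← h5] at hg''
      exact lt_irrefl _ hg''
    have hle := not_lt.mp (fun hlt => hQ (M.symm g') g' ⟨hlt, hg''⟩)
    rw [M.apply_symm_apply]
    exact lt_of_le_of_ne hle (fun he => hne (hrB _ he))
  have hcard : Y.card ≤ X.card := by
    calc Y.card = (Finset.image (⇑M.symm) Y).card :=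
          (Finset.card_image_of_injective Y M.symm.injective).symm
      _ ≤ X.card := Finset.card_le_card hYX
  have heq : Finset.image (⇑Q) X = Y := by
    apply Finset.eq_of_subset_of_card_le hQX
    rw [Finset.card_image_of_injective X Q.injective]
    exact hcard
  have hgY : g ∈ Y := by rw [hY, Finset.mem_filter]; exact ⟨Finset.mem_univ _, h⟩
  rw [← heq, Finset.mem_image] at hgY
  obtain ⟨b, hb, rfl⟩ := hgY
  rw [hX, Finset.mem_filter] at hb
  rw [Q.symm_apply_apply]
  exact hb.2

end Aux2

section Aux3
variable {B G : Type*} [Fintype B] [Fintype G] [DecidableEq B] [DecidableEq G]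
variable {rB : B → G → ℕ} {rG : G → B → ℕ}

/-- No stable partner of a rotation boy lies strictly between his current and next girl. -/
lemma lemS (hrB : ∀ b, Function.Injective (rB b)) (hrG : ∀ g, Function.Injective (rG g))
    {M Q : B ≃ G} {ρ : Rotation B G} (hM : StableM rB rG M) (hE : Exposed rB rG M ρ)
    (hQ : StableM rB rG Q) (m : ZMod ρ.r) :
    ¬ (rB (ρ.bs m) (ρ.gs m) < rB (ρ.bs m) (Q (ρ.bs m)) ∧
       rB (ρ.bs m) (Q (ρ.bs m)) < rB (ρ.bs m) (ρ.gs (m + 1))) := by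
  rintro ⟨h1, h2⟩
  have h3 := hE.2.2 m (Q (ρ.bs m)) h2
  have hne : M.symm (Q (ρ.bs m)) ≠ ρ.bs m := by
    intro he
    have h5 := congrArg M he
    rw [M.apply_symm_apply, hE.1 m] at h5
    rw [h5] at h1
    exact lt_irrefl _ h1
  have h4 : rG (Q (ρ.bs m)) (M.symm (Q (ρ.bs m))) < rG (Q (ρ.bs m)) (ρ.bs m) :=
    lt_of_le_of_ne (not_lt.mp h3) (fun he => hne (hrG _ he))
  have h5 : rG (Q (ρ.bs m)) (M.symm (Q (ρ.bs m))) < rG (Q (ρ.bs m)) (Q.symm (Q (ρ.bs m))) := by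
    rw [Q.symm_apply_apply]; exact h4
  have h6 := keyD hrB hrG hM hQ h5
  rw [Q.symm_apply_apply] at h6
  rw [hE.1 m] at h6
  exact absurd h1 (not_lt.mpr (le_of_lt h6))

/-- Dual: no stable partner of a rotation girl lies strictly between her old and new boy. -/
lemma lemSd (hrB : ∀ b, Function.Injective (rB b)) (hrG : ∀ g, Function.Injective (rG g))
    {M Q : B ≃ G} {ρ : Rotation B G} (hM : StableM rB rG M) (hE : Exposed rB rG M ρ)
    (hQ : StableM rB rG Q) (m : ZMod ρ.r) :
    ¬ (rG (ρ.gs (m+1)) (ρ.bs m) < rG (ρ.gs (m+1)) (Q.symm (ρ.gs (m+1))) ∧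
       rG (ρ.gs (m+1)) (Q.symm (ρ.gs (m+1))) < rG (ρ.gs (m+1)) (ρ.bs (m+1))) := by
  rintro ⟨h1, h2⟩
  have hel : Eliminates rB rG M ρ (elimEquiv ρ M) := elim_eliminates hE
  set M' : B ≃ G := elimEquiv ρ M with hM'def
  have hM' : StableM rB rG M' := elim_stable hM hel
  have hM'b : M' (ρ.bs m) = ρ.gs (m+1) := hel.2.1 m
  have hMsymm : M.symm (ρ.gs (m+1)) = ρ.bs (m+1) := aux_symm_eq_bs hE (m+1)
  have hne_b' : Q.symm (ρ.gs (m+1)) ≠ ρ.bs m := by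
    intro he; rw [he] at h1; exact lt_irrefl _ h1
  -- step 1 : rB b (Q b) < rB b g₁
  have hQbne : Q (ρ.bs m) ≠ ρ.gs (m+1) := by
    intro he
    have := congrArg Q.symm he
    rw [Q.symm_apply_apply] at this
    exact hne_b' this.symm
  have s1 : rB (ρ.bs m) (Q (ρ.bs m)) < rB (ρ.bs m) (ρ.gs (m+1)) := by
    have hle := not_lt.mp (fun hlt => hQ (ρ.bs m) (ρ.gs (m+1)) ⟨hlt, h1⟩)
    exact lt_of_le_of_ne hle (fun he => hQbne (hrB _ he))
  -- step 1b : rB b (Q b) ≤ rB b (gs m)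
  have s2 : rB (ρ.bs m) (Q (ρ.bs m)) ≤ rB (ρ.bs m) (ρ.gs m) := by
    by_contra hlt
    exact lemS hrB hrG hM hE hQ m ⟨not_le.mp hlt, s1⟩
  -- step 2 : b strictly prefers Q to M'
  have s3 : rB (ρ.bs m) (Q (ρ.bs m)) < rB (ρ.bs m) (M' (ρ.bs m)) := by
    rw [hM'b]; exact s1
  -- step 3 : apply keyD to (M', Q) at girl gs (m+1)
  have hM'symm : M'.symm (ρ.gs (m+1)) = ρ.bs m := by
    rw [elim_symm_gs hel]
    congr 1
    ring
  have s4 : rB (Q.symm (ρ.gs (m+1))) (ρ.gs (m+1)) <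
      rB (Q.symm (ρ.gs (m+1))) (M' (Q.symm (ρ.gs (m+1)))) := by
    apply keyD hrB hrG hM' hQ
    rw [hM'symm]
    exact h1
  -- step 4 : stability of M at (b', g₁)
  have hMb'ne : M (Q.symm (ρ.gs (m+1))) ≠ ρ.gs (m+1) := by
    intro he
    have := congrArg M.symm he
    rw [M.symm_apply_apply, hMsymm] at this
    rw [this] at h2
    exact lt_irrefl _ h2
  have s5 : rB (Q.symm (ρ.gs (m+1))) (M (Q.symm (ρ.gs (m+1)))) <
      rB (Q.symm (ρ.gs (m+1))) (ρ.gs (m+1)) := by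
    have h2' : rG (ρ.gs (m+1)) (Q.symm (ρ.gs (m+1))) <
        rG (ρ.gs (m+1)) (M.symm (ρ.gs (m+1))) := by rw [hMsymm]; exact h2
    have hle := not_lt.mp (fun hlt => hM (Q.symm (ρ.gs (m+1))) (ρ.gs (m+1)) ⟨hlt, h2'⟩)
    exact lt_of_le_of_ne hle (fun he => hMb'ne (hrB _ he))
  -- step 5 : b' is a rotation boy
  have s6 : ∃ k, Q.symm (ρ.gs (m+1)) = ρ.bs k := by
    by_contra hcon
    push_neg at hcon
    rw [hel.2.2 _ hcon] at s4
    exact absurd s4 (not_lt.mpr (le_of_lt s5))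
  obtain ⟨k, hk⟩ := s6
  rw [hk] at s4 s5 h1 h2
  rw [hel.2.1 k] at s4
  rw [hE.1 k] at s5
  exact hE.2.2 k (ρ.gs (m+1)) s4 (by rw [hMsymm]; exact h2)

end Aux3

section Aux4
variable {B G : Type*} [Fintype B] [Fintype G] [DecidableEq B] [DecidableEq G]
variable {rB : B → G → ℕ} {rG : G → B → ℕ}

lemma rot_unique_key (hrB : ∀ b, Function.Injective (rB b))
    (hrG : ∀ g, Function.Injective (rG g)) {M N : B ≃ G} {ρ ρ' : Rotation B G}
    (hM : StableM rB rG M) (hEM : Exposed rB rG M ρ)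
    (hN : StableM rB rG N) (hEN : Exposed rB rG N ρ')
    {i : ZMod ρ.r} {j : ZMod ρ'.r}
    (hb : ρ.bs i = ρ'.bs j) (hg : ρ.gs i = ρ'.gs j) :
    ∀ k : ℕ, ρ.bs (i + (k : ZMod ρ.r)) = ρ'.bs (j + (k : ZMod ρ'.r)) ∧
      ρ.gs (i + (k : ZMod ρ.r)) = ρ'.gs (j + (k : ZMod ρ'.r)) := by
  intro k
  induction k with
  | zero => simpa using ⟨hb, hg⟩
  | succ k ih =>
    obtain ⟨ihb, ihg⟩ := ih
    have hcast : i + ((k+1 : ℕ) : ZMod ρ.r) = (i + (k : ZMod ρ.r)) + 1 := by push_cast; ring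
    have hcast' : j + ((k+1 : ℕ) : ZMod ρ'.r) = (j + (k : ZMod ρ'.r)) + 1 := by push_cast; ring
    rw [hcast, hcast']
    have helM := elim_eliminates (rB := rB) (rG := rG) hEM
    have helN := elim_eliminates (rB := rB) (rG := rG) hEN
    have hM2 : StableM rB rG (elimEquiv ρ M) := elim_stable hM helM
    have hN2 : StableM rB rG (elimEquiv ρ' N) := elim_stable hN helN
    have hNb : elimEquiv ρ' N (ρ.bs (i+(k : ZMod ρ.r))) = ρ'.gs (j+(k : ZMod ρ'.r)+1) := by
      rw [ihb]; exact helN.2.1 (j+(k : ZMod ρ'.r))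
    have hMb : elimEquiv ρ M (ρ.bs (i+(k : ZMod ρ.r))) = ρ.gs (i+(k : ZMod ρ.r)+1) :=
      helM.2.1 (i+(k : ZMod ρ.r))
    have hw1 : rB (ρ.bs (i+(k : ZMod ρ.r))) (ρ.gs (i+(k : ZMod ρ.r))) <
        rB (ρ.bs (i+(k : ZMod ρ.r))) (ρ'.gs (j+(k : ZMod ρ'.r)+1)) := by
      rw [ihg, ihb]; exact aux_succ_worse hrB hN hEN (j+(k : ZMod ρ'.r))
    have hw2 : rB (ρ.bs (i+(k : ZMod ρ.r))) (ρ.gs (i+(k : ZMod ρ.r))) <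
        rB (ρ.bs (i+(k : ZMod ρ.r))) (ρ.gs (i+(k : ZMod ρ.r)+1)) :=
      aux_succ_worse hrB hM hEM (i+(k : ZMod ρ.r))
    have hg1 : rB (ρ.bs (i+(k : ZMod ρ.r))) (ρ.gs (i+(k : ZMod ρ.r)+1)) ≤
        rB (ρ.bs (i+(k : ZMod ρ.r))) (ρ'.gs (j+(k : ZMod ρ'.r)+1)) := by
      by_contra hcon
      apply lemS hrB hrG hM hEM hN2 (i+(k : ZMod ρ.r))
      exact ⟨by rw [hNb]; exact hw1, by rw [hNb]; exact not_le.mp hcon⟩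
    have hg2 : rB (ρ.bs (i+(k : ZMod ρ.r))) (ρ'.gs (j+(k : ZMod ρ'.r)+1)) ≤
        rB (ρ.bs (i+(k : ZMod ρ.r))) (ρ.gs (i+(k : ZMod ρ.r)+1)) := by
      by_contra hcon
      have h := lemS hrB hrG hN hEN hM2 (j+(k : ZMod ρ'.r))
      rw [← ihb] at h
      apply h
      constructor
      · rw [hMb, ← ihg]; exact hw2
      · rw [hMb]; exact not_le.mp hcon
    have hgirl : ρ.gs (i+(k : ZMod ρ.r)+1) = ρ'.gs (j+(k : ZMod ρ'.r)+1) :=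
      hrB _ (le_antisymm hg1 hg2)
    have hNsymm : N.symm (ρ.gs (i+(k : ZMod ρ.r)+1)) = ρ'.bs (j+(k : ZMod ρ'.r)+1) := by
      rw [hgirl]; exact aux_symm_eq_bs hEN (j+(k : ZMod ρ'.r)+1)
    have hMsymm : M.symm (ρ.gs (i+(k : ZMod ρ.r)+1)) = ρ.bs (i+(k : ZMod ρ.r)+1) :=
      aux_symm_eq_bs hEM (i+(k : ZMod ρ.r)+1)
    have hd1 : rG (ρ.gs (i+(k : ZMod ρ.r)+1)) (ρ.bs (i+(k : ZMod ρ.r))) <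
        rG (ρ.gs (i+(k : ZMod ρ.r)+1)) (ρ'.bs (j+(k : ZMod ρ'.r)+1)) := by
      have h := hEN.2.1 (j+(k : ZMod ρ'.r))
      rw [← hgirl, ← ihb, hNsymm] at h
      exact h
    have hd2 : rG (ρ.gs (i+(k : ZMod ρ.r)+1)) (ρ.bs (i+(k : ZMod ρ.r))) <
        rG (ρ.gs (i+(k : ZMod ρ.r)+1)) (ρ.bs (i+(k : ZMod ρ.r)+1)) := by
      have h := hEM.2.1 (i+(k : ZMod ρ.r))
      rw [hMsymm] at h
      exact h
    have hb1 : rG (ρ.gs (i+(k : ZMod ρ.r)+1)) (ρ.bs (i+(k : ZMod ρ.r)+1)) ≤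
        rG (ρ.gs (i+(k : ZMod ρ.r)+1)) (ρ'.bs (j+(k : ZMod ρ'.r)+1)) := by
      by_contra hcon
      apply lemSd hrB hrG hM hEM hN (i+(k : ZMod ρ.r))
      exact ⟨by rw [hNsymm]; exact hd1, by rw [hNsymm]; exact not_le.mp hcon⟩
    have hb2 : rG (ρ.gs (i+(k : ZMod ρ.r)+1)) (ρ'.bs (j+(k : ZMod ρ'.r)+1)) ≤
        rG (ρ.gs (i+(k : ZMod ρ.r)+1)) (ρ.bs (i+(k : ZMod ρ.r)+1)) := by
      by_contra hcon
      have h := lemSd hrB hrG hN hEN hM (j+(k : ZMod ρ'.r))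
      rw [← hgirl, ← ihb, hMsymm] at h
      exact h ⟨hd2, not_le.mp hcon⟩
    exact ⟨hrG _ (le_antisymm hb1 hb2), hgirl⟩

lemma rotPairs_subset (hrB : ∀ b, Function.Injective (rB b))
    (hrG : ∀ g, Function.Injective (rG g)) {M N : B ≃ G} {ρ ρ' : Rotation B G}
    (hM : StableM rB rG M) (hEM : Exposed rB rG M ρ)
    (hN : StableM rB rG N) (hEN : Exposed rB rG N ρ')
    {i : ZMod ρ.r} {j : ZMod ρ'.r}
    (hb : ρ.bs i = ρ'.bs j) (hg : ρ.gs i = ρ'.gs j) :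
    rotPairs ρ ⊆ rotPairs ρ' := by
  rintro ⟨x, y⟩ ⟨m, hm⟩
  haveI : NeZero ρ.r := ⟨by have := ρ.two_le; omega⟩
  obtain ⟨k, hk⟩ := ZMod.natCast_zmod_surjective (m - i)
  have hm' : m = i + (k : ZMod ρ.r) := by rw [hk]; ring
  obtain ⟨hbk, hgk⟩ := rot_unique_key hrB hrG hM hEM hN hEN hb hg k
  refine ⟨j + (k : ZMod ρ'.r), ?_⟩
  rw [hm, hm', hbk, hgk]

lemma rot_unique (hrB : ∀ b, Function.Injective (rB b))
    (hrG : ∀ g, Function.Injective (rG g)) {M N : B ≃ G} {ρ ρ' : Rotation B G}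
    (hM : StableM rB rG M) (hEM : Exposed rB rG M ρ)
    (hN : StableM rB rG N) (hEN : Exposed rB rG N ρ')
    {i : ZMod ρ.r} {j : ZMod ρ'.r}
    (hb : ρ.bs i = ρ'.bs j) (hg : ρ.gs i = ρ'.gs j) :
    rotPairs ρ = rotPairs ρ' :=
  Set.Subset.antisymm (rotPairs_subset hrB hrG hM hEM hN hEN hb hg)
    (rotPairs_subset hrB hrG hN hEN hM hEM hb.symm hg.symm)

lemma rot_unique_to (hrB : ∀ b, Function.Injective (rB b))
    (hrG : ∀ g, Function.Injective (rG g)) {M N : B ≃ G} {ρ ρ' : Rotation B G}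
    (hM : StableM rB rG M) (hEM : Exposed rB rG M ρ)
    (hN : StableM rB rG N) (hEN : Exposed rB rG N ρ')
    {i : ZMod ρ.r} {j : ZMod ρ'.r}
    (hb : ρ.bs i = ρ'.bs j) (hg : ρ.gs (i+1) = ρ'.gs (j+1)) :
    rotPairs ρ = rotPairs ρ' := by
  have hNb : N (ρ.bs i) = ρ'.gs j := by rw [hb]; exact hEN.1 j
  have hMb : M (ρ.bs i) = ρ.gs i := hEM.1 i
  have hw' : rB (ρ.bs i) (ρ'.gs j) < rB (ρ.bs i) (ρ.gs (i+1)) := by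
    rw [hb, hg]; exact aux_succ_worse hrB hN hEN j
  have hw : rB (ρ.bs i) (ρ.gs i) < rB (ρ.bs i) (ρ'.gs (j+1)) := by
    rw [← hg]; exact aux_succ_worse hrB hM hEM i
  have h1 : rB (ρ.bs i) (ρ'.gs j) ≤ rB (ρ.bs i) (ρ.gs i) := by
    by_contra hcon
    apply lemS hrB hrG hM hEM hN i
    exact ⟨by rw [hNb]; exact not_le.mp hcon, by rw [hNb]; exact hw'⟩
  have h2 : rB (ρ.bs i) (ρ.gs i) ≤ rB (ρ.bs i) (ρ'.gs j) := by
    by_contra hcon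
    have h := lemS hrB hrG hN hEN hM j
    rw [← hb] at h
    apply h
    exact ⟨by rw [hMb]; exact not_le.mp hcon, by rw [hMb]; exact hw⟩
  exact rot_unique hrB hrG hM hEM hN hEN hb (hrB _ (le_antisymm h2 h1))

end Aux4

section Aux5
variable {B G : Type*} [Fintype B] [Fintype G] [DecidableEq B] [DecidableEq G]
variable {rB : B → G → ℕ} {rG : G → B → ℕ}

lemma chain_stable : ∀ {Ls : List (Rotation B G)} {M M' : B ≃ G},
    StableM rB rG M → ElimChain rB rG M Ls M' → StableM rB rG M'
  | [], M, M', hS, hch => by rw [show M = M' from hch] at hS; exact hS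
  | ρ :: Ls, M, M', hS, hch => by
      obtain ⟨N, hel, hch'⟩ := hch
      exact chain_stable (elim_stable hS hel) hch'

lemma chain_mono (hrB : ∀ b, Function.Injective (rB b)) :
    ∀ {Ls : List (Rotation B G)} {M M' : B ≃ G},
    StableM rB rG M → ElimChain rB rG M Ls M' → ∀ b, rB b (M b) ≤ rB b (M' b)
  | [], M, M', _, hch, b => by rw [show M = M' from hch]
  | ρ :: Ls, M, M', hS, hch, b => by
      obtain ⟨N, hel, hch'⟩ := hch
      exact le_trans (boy_worsens hrB hS hel b)
        (chain_mono hrB (elim_stable hS hel) hch' b)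

lemma chain_split : ∀ {Ls₁ Ls₂ : List (Rotation B G)} {M M' : B ≃ G},
    ElimChain rB rG M (Ls₁ ++ Ls₂) M' →
    ∃ N, ElimChain rB rG M Ls₁ N ∧ ElimChain rB rG N Ls₂ M'
  | [], Ls₂, M, M', hch => ⟨M, rfl, hch⟩
  | ρ :: Ls₁, Ls₂, M, M', hch => by
      obtain ⟨N, hel, hch'⟩ := hch
      obtain ⟨N', h1, h2⟩ := chain_split hch'
      exact ⟨N', ⟨N, hel, h1⟩, h2⟩

/-- If a rotation in the chain moves `b` from `g`, then `b` ends up strictly worse than `g`. -/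
lemma chain_movesFrom_lt (hrB : ∀ b, Function.Injective (rB b)) :
    ∀ {Ls : List (Rotation B G)} {M M' : B ≃ G},
    StableM rB rG M → ElimChain rB rG M Ls M' → ∀ {ρ}, ρ ∈ Ls →
    ∀ {m : ZMod ρ.r} {b g}, ρ.bs m = b → ρ.gs m = g → rB b g < rB b (M' b)
  | [], M, M', _, _, ρ, hmem, m, b, g, _, _ => by simp at hmem
  | ρ₀ :: Ls, M, M', hS, hch, ρ, hmem, m, b, g, hbm, hgm => by
      obtain ⟨N, hel, hch'⟩ := hch
      rcases List.mem_cons.mp hmem with h | h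
      · subst h
        have h1 : rB b g < rB b (N b) := by
          subst hbm; subst hgm
          rw [hel.2.1 m]
          exact aux_succ_worse hrB hS hel.1 m
        exact lt_of_lt_of_le h1 (chain_mono hrB (elim_stable hS hel) hch' b)
      · exact chain_movesFrom_lt hrB (elim_stable hS hel) hch' h hbm hgm

/-- If `b`'s partner changes from `g` along a chain, some rotation in the chain,
exposed in a stable intermediate matching, moves `b` from `g`. -/
lemma chain_detect_from :
    ∀ {Ls : List (Rotation B G)} {M M' : B ≃ G},
    StableM rB rG M → ElimChain rB rG M Ls M' → ∀ {b g}, M b = g → M' b ≠ g →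
    ∃ ρ ∈ Ls, ∃ N, StableM rB rG N ∧ Exposed rB rG N ρ ∧ ∃ m, ρ.bs m = b ∧ ρ.gs m = g
  | [], M, M', _, hch, b, g, hMb, hM'b => absurd (show M = M' from hch ▸ rfl) (by
      intro he; exact hM'b (he ▸ hMb))
  | ρ₀ :: Ls, M, M', hS, hch, b, g, hMb, hM'b => by
      obtain ⟨N, hel, hch'⟩ := hch
      by_cases hN : N b = g
      · obtain ⟨ρ, h1, h2⟩ := chain_detect_from (elim_stable hS hel) hch' hN hM'b
        exact ⟨ρ, List.mem_cons_of_mem _ h1, h2⟩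
      · refine ⟨ρ₀, List.mem_cons_self, M, hS, hel.1, ?_⟩
        by_cases hb : ∃ m, b = ρ₀.bs m
        · obtain ⟨m, rfl⟩ := hb
          exact ⟨m, rfl, by rw [← hel.1.1 m]; exact hMb⟩
        · push_neg at hb
          exact absurd (by rw [hel.2.2 b hb]; exact hMb) hN

/-- If `b`'s partner becomes `g` along a chain, some rotation in the chain,
exposed in a stable intermediate matching, moves `b` to `g`. -/
lemma chain_detect_to :
    ∀ {Ls : List (Rotation B G)} {M M' : B ≃ G},
    StableM rB rG M → ElimChain rB rG M Ls M' → ∀ {b g}, M b ≠ g → M' b = g →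
    ∃ ρ ∈ Ls, ∃ N, StableM rB rG N ∧ Exposed rB rG N ρ ∧ ∃ m, ρ.bs m = b ∧ ρ.gs (m+1) = g
  | [], M, M', _, hch, b, g, hMb, hM'b => absurd (show M = M' from hch ▸ rfl) (by
      intro he; exact hMb (he ▸ hM'b))
  | ρ₀ :: Ls, M, M', hS, hch, b, g, hMb, hM'b => by
      obtain ⟨N, hel, hch'⟩ := hch
      by_cases hN : N b = g
      · refine ⟨ρ₀, List.mem_cons_self, M, hS, hel.1, ?_⟩
        by_cases hb : ∃ m, b = ρ₀.bs m
        · obtain ⟨m, rfl⟩ := hb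
          exact ⟨m, rfl, by rw [← hel.2.1 m]; exact hN⟩
        · push_neg at hb
          exact absurd (by rw [← hel.2.2 b hb]; exact hN) hMb
      · obtain ⟨ρ, h1, h2⟩ := chain_detect_to (elim_stable hS hel) hch' hN hM'b
        exact ⟨ρ, List.mem_cons_of_mem _ h1, h2⟩

/-- The girl-optimal matching is boy-pessimal. -/
lemma girlOpt_boyPessimal (hrG : ∀ g, Function.Injective (rG g)) {Mz Q : B ≃ G}
    (hMz : GirlOptimal rB rG Mz) (hQ : StableM rB rG Q) (b : B) :
    rB b (Q b) ≤ rB b (Mz b) := by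
  by_contra hcon
  push_neg at hcon
  have hne : Q b ≠ Mz b := fun he => by rw [he] at hcon; exact lt_irrefl _ hcon
  have hQsymm : Q.symm (Mz b) ≠ b := by
    intro he
    have h0 := congrArg Q he
    rw [Q.apply_symm_apply] at h0
    exact hne h0.symm
  have h1 := not_lt.mp (fun hlt => hQ b (Mz b) ⟨hcon, hlt⟩)
  have h2 := hMz.2 Q hQ (Mz b)
  rw [Mz.symm_apply_apply] at h2
  have h3 : rG (Mz b) (Q.symm (Mz b)) = rG (Mz b) b := le_antisymm h1 h2
  exact hQsymm (hrG _ h3)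

/-- No rotation moves `b` away from his girl-optimal partner. -/
lemma no_movesFrom_girlOpt (hrB : ∀ b, Function.Injective (rB b))
    (hrG : ∀ g, Function.Injective (rG g)) {Mz Q : B ≃ G} {ρ : Rotation B G}
    (hMz : GirlOptimal rB rG Mz) (hQ : StableM rB rG Q) (hE : Exposed rB rG Q ρ)
    {m : ZMod ρ.r} {b : B} (hbm : ρ.bs m = b) (hgm : ρ.gs m = Mz b) : False := by
  have hel := elim_eliminates (rB := rB) (rG := rG) hE
  have hQ' : StableM rB rG (elimEquiv ρ Q) := elim_stable hQ hel
  subst hbm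
  have h1 : rB (ρ.bs m) (Mz (ρ.bs m)) < rB (ρ.bs m) (elimEquiv ρ Q (ρ.bs m)) := by
    rw [← hgm, hel.2.1 m]
    exact aux_succ_worse hrB hQ hE m
  exact absurd (girlOpt_boyPessimal hrG hMz hQ' (ρ.bs m)) (not_le.mpr h1)

end Aux5

section Paths
variable {W : Type*} {R : W → W → Prop} {S : Set W}

lemma path_last_out (Hmono : ∀ x y, R x y → y ∈ S → x ∈ S) :
    ∀ {P : List W}, P.Chain' R → ∀ {u v}, P.head? = some u → P.getLast? = some v →
      u ∉ S → v ∉ S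
  | [], _, u, v, hu, _, _ => by simp at hu
  | [a], _, u, v, hu, hv, huS => by
      simp at hu hv; rwa [← hv, hu]
  | a :: b :: t, hP, u, v, hu, hv, huS => by
      obtain rfl : a = u := by simpa using hu
      have hR : R a b := (List.isChain_cons_cons.mp hP).1
      have hP' : (b :: t).Chain' R := (List.isChain_cons_cons.mp hP).2
      have hb : b ∉ S := fun hbs => huS (Hmono a b hR hbs)
      exact path_last_out Hmono hP' rfl (by rw [← hv]; rfl) hb

lemma cuts_iff_ends (Hmono : ∀ x y, R x y → y ∈ S → x ∈ S) :
    ∀ {P : List W}, P.Chain' R → ∀ {u v}, P.head? = some u → P.getLast? = some v →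
      (CutsPath S P ↔ u ∈ S ∧ v ∉ S)
  | [], _, u, v, hu, _ => by simp at hu
  | [a], _, u, v, hu, hv => by
      simp at hu hv
      constructor
      · rintro ⟨q, hq, _⟩; simp [List.zip] at hq
      · rintro ⟨h1, h2⟩; rw [← hu] at h1; rw [← hv] at h2; exact absurd h1 h2
  | a :: b :: t, hP, u, v, hu, hv => by
      obtain rfl : a = u := by simpa using hu
      have hR : R a b := (List.isChain_cons_cons.mp hP).1
      have hP' : (b :: t).Chain' R := (List.isChain_cons_cons.mp hP).2
      have hv' : (b :: t).getLast? = some v := by rw [← hv]; rfl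
      have IH := cuts_iff_ends Hmono hP' rfl hv'
      constructor
      · rintro ⟨q, hq, hq1, hq2⟩
        rcases List.mem_cons.mp (by simpa using hq) with h | h
        · subst h
          exact ⟨hq1, path_last_out Hmono hP' rfl hv' hq2⟩
        · have hcut : CutsPath S (b :: t) := ⟨q, by simpa using h, hq1, hq2⟩
          obtain ⟨hb, hvS⟩ := IH.mp hcut
          exact ⟨Hmono a b hR hb, hvS⟩
      · rintro ⟨haS, hvS⟩
        by_cases hb : b ∈ S
        · obtain ⟨q, hq, hq1, hq2⟩ := IH.mpr ⟨hb, hvS⟩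
          refine ⟨q, ?_, hq1, hq2⟩
          simp only [List.zip_cons_cons, List.tail_cons, List.mem_cons]
          exact Or.inr (by simpa using hq)
        · exact ⟨(a, b), by simp, haS, hb⟩

end Paths

/-- Let `C` be a closed subset of the rotation poset and `S = {src} ∪ {node i : i ∈ C}`
the corresponding ideal cut side in the augmented DAG `G` (edge relation `Egr`,
respecting the precedence order, with source before all rotations and sink after all).
For a pair `bg` not in every stable matching, with associated path `P = P_{bg}`:
`S` cuts `P` iff the stable matching generated by `C` contains the pair `bg`. -/
theorem cut_iff_pair_matched {B G ι : Type*} [Fintype B] [Fintype G]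
    [DecidableEq B] [DecidableEq G] [DecidableEq ι]
    (rB : B → G → ℕ) (rG : G → B → ℕ)
    (hrB : ∀ b, Function.Injective (rB b)) (hrG : ∀ g, Function.Injective (rG g))
    (rot : ι → Rotation B G) (hrot : ∀ i, IsRotation rB rG (rot i))
    (hinj : ∀ i j, rotPairs (rot i) = rotPairs (rot j) → i = j)
    (Egr : Vtx ι → Vtx ι → Prop)
    (hEprec : ∀ i j, Egr (Vtx.node i) (Vtx.node j) → Precedes rB rG (rot i) (rot j))
    (hsrc : ∀ v, ¬ Egr v Vtx.src) (hsnk : ∀ v, ¬ Egr Vtx.snk v)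
    (M₀ Mz : B ≃ G) (hM₀ : BoyOptimal rB rG M₀) (hMz : GirlOptimal rB rG Mz)
    (C : Set ι) (hC : ∀ i ∈ C, ∀ j, Precedes rB rG (rot j) (rot i) → j ∈ C)
    (MC : B ≃ G) (hMC : GeneratedBy rB rG M₀ rot C MC)
    (b : B) (g : G)
    (P : List (Vtx ι)) (hchain : P.Chain' Egr)
    (hspec : PathSpec M₀ Mz rot b g P) :
    CutsPath (insert Vtx.src (Vtx.node '' C)) P ↔ MC b = g := by
  classical
  obtain ⟨L, hLmem, hLchain⟩ := hMC
  have hM₀s : StableM rB rG M₀ := hM₀.1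
  set S : Set (Vtx ι) := insert Vtx.src (Vtx.node '' C) with hSdef
  have Hmono : ∀ x y : Vtx ι, Egr x y → y ∈ S → x ∈ S := by
    intro x y hxy hy
    rcases Set.mem_insert_iff.mp hy with h | h
    · exact absurd (h ▸ hxy) (hsrc x)
    · obtain ⟨jj, hjC, rfl⟩ := h
      cases x with
      | src => exact Set.mem_insert _ _
      | snk => exact absurd hxy (hsnk _)
      | node ii =>
          exact Set.mem_insert_iff.mpr (Or.inr ⟨ii, hC jj hjC ii (hEprec ii jj hxy), rfl⟩)
  have hnode_mem : ∀ ii : ι, (Vtx.node ii ∈ S) ↔ ii ∈ C := by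
    intro ii
    simp only [hSdef, Set.mem_insert_iff, Set.mem_image]
    constructor
    · rintro (h | ⟨a, haC, ha⟩)
      · exact absurd h (by simp)
      · obtain rfl : a = ii := by injection ha
        exact haC
    · intro h; exact Or.inr ⟨ii, h, rfl⟩
  have hsnk_not : Vtx.snk ∉ S := by simp [hSdef]
  have hsrc_mem : Vtx.src ∈ S := Set.mem_insert _ _
  have hMCne_of_lt : rB b g < rB b (MC b) → MC b ≠ g := by
    intro h he; rw [he] at h; exact lt_irrefl _ h
  have hfrom_lt : ∀ ii : ι, MovesFrom (rot ii) b g → ii ∈ C → rB b g < rB b (MC b) := by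
    rintro ii ⟨m, hbm, hgm⟩ hiC
    exact chain_movesFrom_lt hrB hM₀s hLchain
      (List.mem_map_of_mem (f := rot) ((hLmem ii).mpr hiC)) hbm hgm
  have hsplit : ∀ ii : ι, ii ∈ C → MovesTo (rot ii) b g →
      ∃ N' : B ≃ G, StableM rB rG N' ∧ N' b = g ∧
        ∃ L₂ : List ι, (∀ k ∈ L₂, k ∈ C) ∧ ElimChain rB rG N' (L₂.map rot) MC := by
    rintro ii hiC ⟨m, hbm, hgm⟩
    have hiL : ii ∈ L := (hLmem ii).mpr hiC
    obtain ⟨L₁, L₂, hL12⟩ := List.append_of_mem hiL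
    rw [hL12, List.map_append, List.map_cons] at hLchain
    obtain ⟨N, hch1, hch2⟩ := chain_split hLchain
    obtain ⟨N', hel, hch3⟩ := hch2
    have hNs : StableM rB rG N := chain_stable hM₀s hch1
    refine ⟨N', elim_stable hNs hel, ?_, L₂, ?_, hch3⟩
    · rw [← hbm, hel.2.1 m]; exact hgm
    · intro k hk
      exact (hLmem k).mp (by rw [hL12]; exact List.mem_append_right _ (List.mem_cons_of_mem _ hk))
  rcases hspec with ⟨hM0b, hMzb, i, hmv, hhead, hlast⟩ |
    ⟨hM0b, hMzb, i, hmv, hhead, hlast⟩ |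
    ⟨hM0b, hMzb, i, j, hmvTo, hmvFrom, hhead, hlast⟩
  · -- Case 1 : bg ∈ M₀, bg ∉ Mz
    rw [cuts_iff_ends Hmono hchain hhead hlast]
    constructor
    · rintro ⟨-, hnot⟩
      have hiC : i ∉ C := fun h => hnot ((hnode_mem i).mpr h)
      by_contra hne
      obtain ⟨ρ, hρmem, N, hNs, hNE, m', hbm', hgm'⟩ := chain_detect_from hM₀s hLchain hM0b hne
      obtain ⟨k, hkL, rfl⟩ := List.mem_map.mp hρmem
      obtain ⟨Q, hQs, hQE⟩ := hrot i
      obtain ⟨m, hbm, hgm⟩ := hmv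
      have hki := hinj k i (rot_unique hrB hrG hNs hNE hQs hQE
        (hbm'.trans hbm.symm) (hgm'.trans hgm.symm))
      exact hiC (hki ▸ (hLmem k).mp hkL)
    · intro hMCb
      refine ⟨hsrc_mem, fun hmem => ?_⟩
      exact absurd hMCb (hMCne_of_lt (hfrom_lt i hmv ((hnode_mem i).mp hmem)))
  · -- Case 2 : bg ∉ M₀, bg ∈ Mz
    rw [cuts_iff_ends Hmono hchain hhead hlast]
    constructor
    · rintro ⟨hmem, -⟩
      obtain ⟨N', hN's, hN'b, L₂, hL₂C, hch⟩ := hsplit i ((hnode_mem i).mp hmem) hmv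
      by_contra hne
      obtain ⟨ρ, hρmem, N, hNs, hNE, m', hbm', hgm'⟩ := chain_detect_from hN's hch hN'b hne
      exact no_movesFrom_girlOpt hrB hrG hMz hNs hNE hbm' (hgm'.trans hMzb.symm)
    · intro hMCb
      refine ⟨?_, hsnk_not⟩
      apply (hnode_mem i).mpr
      obtain ⟨ρ, hρmem, N, hNs, hNE, m', hbm', hgm'⟩ := chain_detect_to hM₀s hLchain hM0b hMCb
      obtain ⟨k, hkL, rfl⟩ := List.mem_map.mp hρmem
      obtain ⟨Q, hQs, hQE⟩ := hrot i
      obtain ⟨m, hbm, hgm⟩ := hmv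
      have hki := hinj k i (rot_unique_to hrB hrG hNs hNE hQs hQE
        (hbm'.trans hbm.symm) (hgm'.trans hgm.symm))
      exact hki ▸ (hLmem k).mp hkL
  · -- Case 3 : bg ∉ M₀, bg ∉ Mz
    rw [cuts_iff_ends Hmono hchain hhead hlast]
    constructor
    · rintro ⟨hmemi, hmemj⟩
      have hjC : j ∉ C := fun h => hmemj ((hnode_mem j).mpr h)
      obtain ⟨N', hN's, hN'b, L₂, hL₂C, hch⟩ := hsplit i ((hnode_mem i).mp hmemi) hmvTo
      by_contra hne
      obtain ⟨ρ, hρmem, N, hNs, hNE, m', hbm', hgm'⟩ := chain_detect_from hN's hch hN'b hne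
      obtain ⟨k, hkL₂, rfl⟩ := List.mem_map.mp hρmem
      obtain ⟨Q, hQs, hQE⟩ := hrot j
      obtain ⟨m, hbm, hgm⟩ := hmvFrom
      have hkj := hinj k j (rot_unique hrB hrG hNs hNE hQs hQE
        (hbm'.trans hbm.symm) (hgm'.trans hgm.symm))
      exact hjC (hkj ▸ hL₂C k hkL₂)
    · intro hMCb
      constructor
      · apply (hnode_mem i).mpr
        obtain ⟨ρ, hρmem, N, hNs, hNE, m', hbm', hgm'⟩ := chain_detect_to hM₀s hLchain hM0b hMCb
        obtain ⟨k, hkL, rfl⟩ := List.mem_map.mp hρmem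
        obtain ⟨Q, hQs, hQE⟩ := hrot i
        obtain ⟨m, hbm, hgm⟩ := hmvTo
        have hki := hinj k i (rot_unique_to hrB hrG hNs hNE hQs hQE
          (hbm'.trans hbm.symm) (hgm'.trans hgm.symm))
        exact hki ▸ (hLmem k).mp hkL
      · intro hmemj
        obtain ⟨m, hbm, hgm⟩ := hmvFrom
        exact absurd hMCb (hMCne_of_lt (chain_movesFrom_lt hrB hM₀s hLchain
          (List.mem_map_of_mem (f := rot) ((hLmem j).mpr ((hnode_mem j).mp hmemj))) hbm hgm))
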